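/- For every λ ∈ ℂ such that P(λ) is invertible and λ·I_{pN} − 𝒜_p is invertible (all real matrices regarded as complex), the matrix (λ·I_{pN} − 𝒜_p)^{−1} E_p equals the block column whose i-th N×N block is λ^{i−1} P(λ)^{−1} for i = 1,…,p, and consequently 𝒞_q (λ·I_{pN} − 𝒜_p)^{−1} E_p = Q(λ) P(λ)^{−1}. -/

import Mathlib

open Matrix

noncomputable section

/-- The companion block matrix `𝒜_p ∈ M_{pN}(ℝ)` of the family `A 0 = A_1, …, A (p-1) = A_p`:
identity `N×N` blocks in positions `(i, i+1)` for `i = 1,…,p−1`, last block row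
`[A_p, A_{p−1}, …, A_1]`, and zero blocks elsewhere. -/
def companionM {N p : ℕ} (A : Fin p → Matrix (Fin N) (Fin N) ℝ) :
    Matrix (Fin p × Fin N) (Fin p × Fin N) ℝ :=
  Matrix.of fun x y =>
    if (x.1 : ℕ) + 1 = p then A y.1.rev x.2 y.2
    else if (y.1 : ℕ) = (x.1 : ℕ) + 1 then (if x.2 = y.2 then (1 : ℝ) else 0) else 0

/-- The matrix polynomial `P(λ) := λ^p I_N − A_1 λ^{p−1} − ⋯ − A_p` over `ℂ`
(here `A i = A_{i+1}`). -/
def Ppoly {N p : ℕ} (A : Fin p → Matrix (Fin N) (Fin N) ℝ) (z : ℂ) :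
    Matrix (Fin N) (Fin N) ℂ :=
  z ^ p • 1 - ∑ i : Fin p, z ^ (p - 1 - (i : ℕ)) • (A i).map (algebraMap ℝ ℂ)

/-- The matrix polynomial `Q(λ) := C_0 + C_1 λ + ⋯ + C_q λ^q` over `ℂ`
(here `C j = C_j` for `j = 0,…,q`). -/
def Qpoly {N p : ℕ} (q : ℕ) (hq : q < p) (C : Fin p → Matrix (Fin N) (Fin N) ℝ) (z : ℂ) :
    Matrix (Fin N) (Fin N) ℂ :=
  ∑ j : Fin (q + 1), z ^ (j : ℕ) • (C (Fin.castLE hq j)).map (algebraMap ℝ ℂ)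

/-- The block column `E_p = (0,…,0,I_N)ᵀ ∈ M_{pN,N}`, over `ℂ`. -/
def EpC {N p : ℕ} : Matrix (Fin p × Fin N) (Fin N) ℂ :=
  Matrix.of fun x j => if (x.1 : ℕ) + 1 = p then (if x.2 = j then (1 : ℂ) else 0) else 0

/-- The block row `𝒞_q = [C_0, C_1, …, C_{p−1}] ∈ M_{N,pN}`, over `ℂ`. -/
def CqC {N p : ℕ} (C : Fin p → Matrix (Fin N) (Fin N) ℝ) : Matrix (Fin N) (Fin p × Fin N) ℂ :=
  Matrix.of fun i y => ((C y.1).map (algebraMap ℝ ℂ)) i y.2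

lemma key {N p : ℕ} (A : Fin p → Matrix (Fin N) (Fin N) ℝ) (z : ℂ) (hPz : IsUnit (Ppoly A z).det) :
    (z • (1 : Matrix (Fin p × Fin N) (Fin p × Fin N) ℂ) -
        (companionM A).map (algebraMap ℝ ℂ)) *
      Matrix.of (fun (x : Fin p × Fin N) (j : Fin N) =>
        (z ^ (x.1 : ℕ) • (Ppoly A z)⁻¹) x.2 j) = EpC := by
  set Pinv := (Ppoly A z)⁻¹ with hPinv
  have hP1 : Ppoly A z * Pinv = 1 := mul_nonsing_inv _ hPz
  ext x j
  obtain ⟨a, i⟩ := x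
  rw [mul_apply, Fintype.sum_prod_type]
  simp only [Matrix.sub_apply, Matrix.smul_apply, Matrix.one_apply, Matrix.map_apply,
    Matrix.of_apply, companionM, smul_eq_mul, Prod.mk.injEq, EpC, sub_mul,
    Finset.sum_sub_distrib]
  have h1 : ∑ b : Fin p, ∑ k : Fin N,
      z * (if a = b ∧ i = k then (1:ℂ) else 0) * (z ^ (b:ℕ) * Pinv k j)
      = z * (z ^ (a:ℕ) * Pinv i j) := by
    simp [ite_and, Finset.mul_sum, mul_ite, ite_mul, Finset.sum_ite_eq,
      Finset.sum_ite_eq']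
  by_cases hap : (a : ℕ) + 1 = p
  · rw [if_pos hap]
    simp only [if_pos hap]
    rw [h1]
    have h2 : ∀ b : Fin p, ∑ k : Fin N,
        (algebraMap ℝ ℂ) (A b.rev i k) * (z ^ (b:ℕ) * Pinv k j)
        = z ^ (b:ℕ) * (((A b.rev).map (algebraMap ℝ ℂ)) * Pinv) i j := by
      intro b
      rw [mul_apply, Finset.mul_sum]
      refine Finset.sum_congr rfl fun k _ => ?_
      simp [Matrix.map_apply]; ring
    rw [Finset.sum_congr rfl fun b _ => h2 b]
    have h3 : ∑ b : Fin p, z ^ (b:ℕ) * (((A b.rev).map (algebraMap ℝ ℂ)) * Pinv) i j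
        = ∑ b : Fin p, z ^ (p - 1 - (b:ℕ)) * (((A b).map (algebraMap ℝ ℂ)) * Pinv) i j := by
      refine Fintype.sum_equiv Fin.revPerm _ _ fun b => ?_
      simp only [Fin.revPerm_apply, Fin.rev_rev, Fin.val_rev]
      congr 2
      omega
    rw [h3]
    have h4 := congrArg (fun M => M i j) hP1
    simp only [Ppoly, Matrix.sub_apply, Matrix.smul_apply, Matrix.one_apply, sub_mul,
      Finset.sum_mul, Matrix.sum_apply, smul_mul_assoc, smul_eq_mul] at h4
    have hzp : z * z ^ (a : ℕ) = z ^ p := by rw [← pow_succ', hap]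
    rw [Matrix.one_mul] at h4
    linear_combination h4 + Pinv i j * hzp
  · rw [if_neg hap]
    simp only [if_neg hap]
    rw [h1]
    have hlt : (a : ℕ) + 1 < p := lt_of_le_of_ne (Nat.succ_le_of_lt a.isLt) hap
    have h2 : ∑ b : Fin p, ∑ k : Fin N,
        (algebraMap ℝ ℂ) (if (b:ℕ) = (a:ℕ) + 1 then (if i = k then (1:ℝ) else 0) else 0)
          * (z ^ (b:ℕ) * Pinv k j)
        = z ^ ((a:ℕ)+1) * Pinv i j := by
      have : ∀ b : Fin p, ((b:ℕ) = (a:ℕ) + 1) = (b = ⟨(a:ℕ)+1, hlt⟩) := by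
        intro b; simp [Fin.ext_iff]
      simp only [this]
      simp [apply_ite, ite_mul, Finset.sum_ite_eq', Finset.sum_ite_eq]
    rw [h2, pow_succ]
    ring


lemma key2 {N p q : ℕ} (hq : q < p) (C : Fin p → Matrix (Fin N) (Fin N) ℝ)
    (hC : ∀ j : Fin p, q < (j : ℕ) → C j = 0) (z : ℂ) (R : Matrix (Fin N) (Fin N) ℂ) :
    CqC C * Matrix.of (fun (x : Fin p × Fin N) (j : Fin N) => (z ^ (x.1 : ℕ) • R) x.2 j) =
      Qpoly q hq C z * R := by
  ext i j
  rw [mul_apply, Fintype.sum_prod_type]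
  simp only [CqC, Matrix.of_apply, Matrix.map_apply, Matrix.smul_apply, smul_eq_mul]
  have h2 : ∀ b : Fin p, ∑ k : Fin N,
      (algebraMap ℝ ℂ) (C b i k) * (z ^ (b:ℕ) * R k j)
      = z ^ (b:ℕ) * (((C b).map (algebraMap ℝ ℂ)) * R) i j := by
    intro b
    rw [mul_apply, Finset.mul_sum]
    refine Finset.sum_congr rfl fun k _ => ?_
    simp [Matrix.map_apply]; ring
  rw [Finset.sum_congr rfl fun b _ => h2 b]
  simp only [Qpoly, Finset.sum_mul, smul_mul_assoc, Matrix.sum_apply, Matrix.smul_apply,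
    smul_eq_mul]
  set g : ℕ → ℂ := fun k =>
    if h : k < p then z ^ k * (((C ⟨k, h⟩).map (algebraMap ℝ ℂ)) * R) i j else 0 with hg
  have hL : ∀ b : Fin p, z ^ (b:ℕ) * (((C b).map (algebraMap ℝ ℂ)) * R) i j = g (b:ℕ) := by
    intro b; simp [hg, b.isLt]
  have hR : ∀ b : Fin (q+1), z ^ (b:ℕ) *
      (((C (Fin.castLE hq b)).map (algebraMap ℝ ℂ)) * R) i j = g (b:ℕ) := by
    intro b
    have hb : (b:ℕ) < p := lt_of_lt_of_le b.isLt hq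
    have : Fin.castLE hq b = ⟨(b:ℕ), hb⟩ := rfl
    simp [hg, hb, this]
  rw [Finset.sum_congr rfl fun b _ => hL b, Finset.sum_congr rfl fun b _ => hR b,
    Fin.sum_univ_eq_sum_range, Fin.sum_univ_eq_sum_range]
  refine (Finset.sum_subset (Finset.range_subset_range.2 hq) fun k hk hk2 => ?_).symm
  simp only [Finset.mem_range] at hk hk2
  have : C ⟨k, hk⟩ = 0 := hC ⟨k, hk⟩ (by simp only [Fin.val_mk]; omega)
  simp [hg, hk, this]

/-- For every `λ ∈ ℂ` such that `P(λ)` and `λ I_{pN} − 𝒜_p` are invertible, the matrix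
`(λ I_{pN} − 𝒜_p)^{−1} E_p` is the block column whose `i`-th `N×N` block is
`λ^{i−1} P(λ)^{−1}`, and consequently `𝒞_q (λ I_{pN} − 𝒜_p)^{−1} E_p = Q(λ) P(λ)^{−1}`. -/
theorem companion_resolvent_blocks {N p q : ℕ} (hN : 0 < N) (hp : 0 < p) (hq : q < p)
    (A C : Fin p → Matrix (Fin N) (Fin N) ℝ)
    (hC : ∀ j : Fin p, q < (j : ℕ) → C j = 0)
    (z : ℂ)
    (hPz : IsUnit (Ppoly A z).det)
    (hres : IsUnit
      (z • (1 : Matrix (Fin p × Fin N) (Fin p × Fin N) ℂ) -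
        (companionM A).map (algebraMap ℝ ℂ)).det) :
    (z • (1 : Matrix (Fin p × Fin N) (Fin p × Fin N) ℂ) -
        (companionM A).map (algebraMap ℝ ℂ))⁻¹ * EpC =
      Matrix.of (fun (x : Fin p × Fin N) (j : Fin N) =>
        (z ^ (x.1 : ℕ) • (Ppoly A z)⁻¹) x.2 j) ∧
    CqC C *
        (z • (1 : Matrix (Fin p × Fin N) (Fin p × Fin N) ℂ) -
          (companionM A).map (algebraMap ℝ ℂ))⁻¹ * EpC =
      Qpoly q hq C z * (Ppoly A z)⁻¹ := by
  set M := (z • (1 : Matrix (Fin p × Fin N) (Fin p × Fin N) ℂ) -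
      (companionM A).map (algebraMap ℝ ℂ)) with hM
  have hB := key A z hPz
  have first : M⁻¹ * EpC =
      Matrix.of (fun (x : Fin p × Fin N) (j : Fin N) =>
        (z ^ (x.1 : ℕ) • (Ppoly A z)⁻¹) x.2 j) := by
    rw [← hB]
    exact (Matrix.mul_assoc _ _ _).symm.trans (by rw [Matrix.nonsing_inv_mul _ hres, Matrix.one_mul])
  exact ⟨first, (Matrix.mul_assoc _ _ _).trans ((congrArg (fun X => CqC C * X) first).trans (key2 hq C hC z _))⟩
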